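/- Let N : ℂⁿ → ℝ be a monotone norm and C > 0 a constant such that max_j |x_j| ≤ C·N(x) for all x ∈ ℂⁿ. Then for every ψ ∈ ℂⁿ, N( (exp ψ_1 − 1, …, exp ψ_n − 1) ) ≤ C⁻¹·(exp(C·N(ψ)) − 1); i.e., for u ∈ e^{nℂ} with log coordinates ψ, ‖Pr u − 1‖ ≤ C⁻¹(‖u‖_*^C − 1), where 1 denotes the all-ones vector (Lemma Difference). -/

import Mathlib

open scoped Nat

lemma abs_exp_sub_one_le_exp_abs (z : ℂ) :
    ‖Complex.exp z - 1‖ ≤ Real.exp (‖z‖) - 1 := by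
  have hs : Summable (fun n : ℕ => ‖z‖ ^ n / n !) :=
    Real.summable_pow_div_factorial _
  have hz : Summable (fun n : ℕ => z ^ n / (n ! : ℂ)) := by
    apply Summable.of_norm
    convert hs using 2 with n
    simp [Complex.norm_natCast, abs_of_nonneg]
  have he : Complex.exp z = ∑' n : ℕ, z ^ n / n ! := by
    rw [Complex.exp_eq_exp_ℂ, NormedSpace.exp_eq_tsum_div]
  have her : Real.exp (‖z‖) = ∑' n : ℕ, ‖z‖ ^ n / n ! := by
    rw [Real.exp_eq_exp_ℝ, NormedSpace.exp_eq_tsum_div]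
  have h1 : Complex.exp z - 1 = ∑' n : ℕ, z ^ (n + 1) / (n + 1)! := by
    rw [he, Summable.tsum_eq_zero_add hz]
    simp
  have h2 : Real.exp (‖z‖) - 1 = ∑' n : ℕ, ‖z‖ ^ (n + 1) / (n + 1)! := by
    rw [her, Summable.tsum_eq_zero_add hs]
    simp
  rw [h1, h2]
  calc ‖∑' n : ℕ, z ^ (n + 1) / (n + 1)!‖
      ≤ ∑' n : ℕ, ‖z ^ (n + 1) / (n + 1)!‖ := by
        apply norm_tsum_le_tsum_norm
        apply Summable.of_norm_bounded (hs.comp_injective (add_left_injective 1))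
        intro n
        simp [Complex.norm_natCast, div_le_div_of_nonneg_right]
    _ = ∑' n : ℕ, ‖z‖ ^ (n + 1) / (n + 1)! := by
        congr 1; ext n
        simp [norm_div, norm_pow, Complex.norm_natCast]

lemma exp_sub_one_le_slope {s T : ℝ} (h0 : 0 ≤ s) (hT : s ≤ T) (hTpos : 0 < T) :
    Real.exp s - 1 ≤ (s / T) * (Real.exp T - 1) := by
  have ha : (0:ℝ) ≤ 1 - s / T := by
    have : s / T ≤ 1 := div_le_one_of_le₀ hT hTpos.le
    linarith
  have hb : (0:ℝ) ≤ s / T := by positivity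
  have key := convexOn_exp.2 (Set.mem_univ (0 : ℝ)) (Set.mem_univ T) ha hb (by ring)
  simp only [smul_eq_mul, mul_zero, zero_add, Real.exp_zero] at key
  have hsT : s / T * T = s := div_mul_cancel₀ s hTpos.ne'
  rw [hsT] at key
  nlinarith [key]

/-- Lemma Difference: if `N` is a monotone norm on `ℂⁿ` with `max_j |x_j| ≤ C·N x`, then for
log coordinates `ψ` of `u ∈ e^{nℂ}`, `‖Pr u − 1‖ ≤ C⁻¹ (‖u‖_*^C − 1)`. -/
theorem difference_lemma (n : ℕ) (N : (Fin n → ℂ) → ℝ) (C : ℝ)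
    (hN0 : ∀ x, 0 ≤ N x)
    (hNeq0 : ∀ x, N x = 0 ↔ x = 0)
    (hNsmul : ∀ (α : ℂ) (x), N (α • x) = ‖α‖ * N x)
    (hNadd : ∀ x y, N (x + y) ≤ N x + N y)
    (hNmono : ∀ x y, (∀ j, ‖x j‖ ≤ ‖y j‖) → N x ≤ N y)
    (hC : 0 < C)
    (hCbound : ∀ x, ∀ j, ‖x j‖ ≤ C * N x)
    (ψ : Fin n → ℂ) :
    N (fun j => Complex.exp (ψ j) - 1) ≤ C⁻¹ * (Real.exp (C * N ψ) - 1) := by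
  rcases eq_or_lt_of_le (hN0 ψ) with h0 | hpos
  · -- ψ = 0
    have hψ : ψ = 0 := (hNeq0 ψ).mp h0.symm
    subst hψ
    have : (fun j : Fin n => Complex.exp ((0 : Fin n → ℂ) j) - 1) = 0 := by
      funext j; simp
    rw [this, (hNeq0 0).mpr rfl]
    simp
  · set T : ℝ := C * N ψ with hT
    have hTpos : 0 < T := mul_pos hC hpos
    set lam : ℝ := (Real.exp T - 1) / T with hlam
    have hlam0 : 0 ≤ lam := by
      apply div_nonneg _ hTpos.le
      have := Real.one_le_exp hTpos.le
      linarith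
    have key : N (fun j => Complex.exp (ψ j) - 1) ≤ N ((lam : ℂ) • ψ) := by
      apply hNmono
      intro j
      calc ‖Complex.exp (ψ j) - 1‖
          ≤ Real.exp (‖ψ j‖) - 1 := abs_exp_sub_one_le_exp_abs _
        _ ≤ (‖ψ j‖ / T) * (Real.exp T - 1) :=
            exp_sub_one_le_slope (norm_nonneg _) (hCbound ψ j) hTpos
        _ = lam * ‖ψ j‖ := by rw [hlam]; ring
        _ = ‖((lam : ℂ) • ψ) j‖ := by
            simp [Complex.norm_real, abs_of_nonneg hlam0]
    calc N (fun j => Complex.exp (ψ j) - 1) ≤ N ((lam : ℂ) • ψ) := key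
      _ = lam * N ψ := by
          rw [hNsmul]; simp [Complex.norm_real, abs_of_nonneg hlam0]
      _ = C⁻¹ * (Real.exp (C * N ψ) - 1) := by
          rw [hlam, hT]
          field_simp
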